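/- arXiv:1210.3460 — 3 statements merged into one kernel-verified Lean document; each statement's English description precedes it below -/
import Mathlib

section
/- For a > 0 and b ∈ ℝ, the Fourier transform of the translated Dirac comb δ_{aℤ+b} is (1/a) times the modulated comb ∑_k e^{-2πi b k / a} δ_{k/a}: for every Schwartz function g : ℝ → ℂ, ∑_{k ∈ ℤ} ĝ(a k + b) = (1/a) ∑_{k ∈ ℤ} e^{-2πi b k / a} g(k/a). -/
open scoped Real FourierTransform
open MeasureTheory Filter Asymptotics

noncomputable def fourierTransform (g : ℝ → ℂ) (ξ : ℝ) : ℂ :=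
  ∫ x : ℝ, g x * Complex.exp (-2 * Real.pi * Complex.I * x * ξ)

lemma fourierTransform_eq (g : ℝ → ℂ) (ξ : ℝ) : fourierTransform g ξ = 𝓕 g ξ := by
  rw [Real.fourier_real_eq_integral_exp_smul]
  unfold fourierTransform
  congr 1
  ext x
  rw [smul_eq_mul, mul_comm]
  congr 1
  push_cast
  ring

lemma fourier_h (a b : ℝ) (ha : 0 < a) (g : SchwartzMap ℝ ℂ) (ξ : ℝ) :
    𝓕 (fun x : ℝ => Complex.exp (-2 * Real.pi * Complex.I * b * x / a) * g (x / a)) ξ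
      = (a : ℂ) * 𝓕 (⇑g) (a * ξ + b) := by
  rw [Real.fourier_real_eq_integral_exp_smul,
      Real.fourier_real_eq_integral_exp_smul]
  have key : ∀ x : ℝ,
      Complex.exp (↑(-2 * Real.pi * x * ξ) * Complex.I) •
        (Complex.exp (-2 * Real.pi * Complex.I * b * x / a) * g (x / a))
      = (fun y : ℝ => Complex.exp (↑(-2 * Real.pi * y * (a * ξ + b)) * Complex.I) • g y) (a⁻¹ * x) := by
    intro x
    simp only [smul_eq_mul]
    rw [← mul_assoc, ← Complex.exp_add]
    congr 2
    · have hA : (a:ℂ) ≠ 0 := Complex.ofReal_ne_zero.mpr ha.ne'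
      push_cast
      field_simp
      ring
    · rw [eq_comm, inv_mul_eq_div]
  simp_rw [key]
  rw [MeasureTheory.Measure.integral_comp_mul_left
    (fun y : ℝ => Complex.exp (↑(-2 * Real.pi * y * (a * ξ + b)) * Complex.I) • g y) a⁻¹]
  rw [abs_of_pos (inv_pos.mpr (inv_pos.mpr ha)), inv_inv, Complex.real_smul]

lemma rpow_affine_isBigO (a b : ℝ) (ha : 0 < a) :
    (fun x : ℝ => |a * x + b| ^ (-2:ℝ)) =O[cocompact ℝ] (fun x : ℝ => |x| ^ (-2:ℝ)) := by
  apply IsBigO.of_bound ((a/2) ^ (-2:ℝ))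
  filter_upwards [tendsto_norm_cocompact_atTop.eventually_ge_atTop (max (2*|b|/a) 1)]
    with x hx
  rw [Real.norm_eq_abs] at hx
  have h1 : (1:ℝ) ≤ |x| := le_trans (le_max_right _ _) hx
  have h2 : 2*|b|/a ≤ |x| := le_trans (le_max_left _ _) hx
  have hb2 : |b| ≤ a/2 * |x| := by
    rw [div_le_iff₀ ha] at h2; nlinarith
  have hlow : a/2 * |x| ≤ |a * x + b| := by
    have : |a*x| ≤ |a*x+b| + |b| := by
      calc |a*x| = |a*x+b + (-b)| := by ring_nf
      _ ≤ |a*x+b| + |(-b)| := abs_add_le _ _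
      _ = |a*x+b| + |b| := by rw [abs_neg]
    rw [abs_mul, abs_of_pos ha] at this
    linarith
  have hpos : 0 < a/2 * |x| := by positivity
  have key : |a*x+b| ^ (-2:ℝ) ≤ (a/2 * |x|) ^ (-2:ℝ) :=
    Real.rpow_le_rpow_of_nonpos hpos hlow (by norm_num)
  rw [Real.mul_rpow (by positivity) (abs_nonneg x)] at key
  rw [Real.norm_eq_abs, Real.norm_eq_abs, abs_of_nonneg (Real.rpow_nonneg (abs_nonneg _) _),
    abs_of_nonneg (Real.rpow_nonneg (abs_nonneg _) _)]
  exact key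

/-- The Fourier transform of the translated Dirac comb `δ_{aℤ+b}` is the
modulated comb `(1/a) ∑_k e^{-2πi b k/a} δ_{k/a}`. -/
theorem diracComb_translated (a b : ℝ) (ha : 0 < a) (g : SchwartzMap ℝ ℂ) :
    ∑' k : ℤ, fourierTransform (⇑g) (a * k + b) =
      (1 / (a : ℂ)) *
        ∑' k : ℤ, Complex.exp (-2 * Real.pi * Complex.I * b * k / a) * g (k / a) := by
  set h : ℝ → ℂ := fun x => Complex.exp (-2 * Real.pi * Complex.I * b * x / a) * g (x / a)
    with hh_def
  have hA : (a:ℂ) ≠ 0 := Complex.ofReal_ne_zero.mpr ha.ne'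
  -- continuity
  have hc : Continuous h := by
    apply Continuous.mul
    · exact Complex.continuous_exp.comp (by fun_prop)
    · exact g.continuous.comp (by fun_prop)
  -- tendsto of scaling maps
  have hτ1 : Tendsto (fun x : ℝ => x / a) (cocompact ℝ) (cocompact ℝ) := by
    have := (Homeomorph.mulLeft₀ a⁻¹ (inv_ne_zero ha.ne')).map_cocompact.le
    simp only [Homeomorph.coe_mulLeft₀] at this
    simpa [div_eq_inv_mul, Filter.Tendsto] using this
  have hτ2 : Tendsto (fun x : ℝ => a * x + b) (cocompact ℝ) (cocompact ℝ) := by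
    have := ((Homeomorph.mulLeft₀ a ha.ne').trans (Homeomorph.addRight b)).map_cocompact.le
    exact this
  -- decay of h
  have hg2 := g.isBigO_cocompact_rpow (-2)
  have hh1 : h =O[cocompact ℝ] (fun x : ℝ => |x| ^ (-2:ℝ)) := by
    have comp1 : (fun x : ℝ => g (x / a)) =O[cocompact ℝ] (fun x : ℝ => ‖x / a‖ ^ (-2:ℝ)) :=
      hg2.comp_tendsto hτ1
    have e1 : h =O[cocompact ℝ] (fun x : ℝ => g (x / a)) := by
      apply IsBigO.of_bound 1
      filter_upwards with x
      rw [one_mul, hh_def]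
      simp only [norm_mul]
      have : ‖Complex.exp (-2 * ↑Real.pi * Complex.I * ↑b * ↑x / ↑a)‖ = 1 := by
        rw [Complex.norm_exp]
        have : (-2 * ↑Real.pi * Complex.I * ↑b * ↑x / ↑a : ℂ).re = 0 := by
          have : (-2 * ↑Real.pi * Complex.I * ↑b * ↑x / ↑a : ℂ)
              = Complex.I * ↑(-2 * Real.pi * b * x / a) := by push_cast; ring
          rw [this, Complex.mul_re]
          simp
        rw [this, Real.exp_zero]
      rw [this, one_mul]
    have e2 : (fun x : ℝ => ‖x / a‖ ^ (-2:ℝ)) =O[cocompact ℝ] (fun x : ℝ => |x| ^ (-2:ℝ)) := by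
      apply IsBigO.of_bound (a ^ (2:ℝ))
      filter_upwards with x
      rw [Real.norm_eq_abs, Real.norm_eq_abs, Real.norm_eq_abs,
        abs_of_nonneg (Real.rpow_nonneg (abs_nonneg _) _),
        abs_of_nonneg (Real.rpow_nonneg (abs_nonneg _) _),
        abs_div, abs_of_pos ha, Real.div_rpow (abs_nonneg x) ha.le]
      rw [div_le_iff₀ (by positivity : (0:ℝ) < a ^ (-2:ℝ))]
      have h1 : a ^ (2:ℝ) * a ^ (-2:ℝ) = 1 := by
        rw [← Real.rpow_add ha]; norm_num
      calc |x| ^ (-2:ℝ) = a ^ (2:ℝ) * a ^ (-2:ℝ) * |x| ^ (-2:ℝ) := by rw [h1, one_mul]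
        _ = a ^ (2:ℝ) * |x| ^ (-2:ℝ) * a ^ (-2:ℝ) := by ring
        _ ≤ a ^ (2:ℝ) * |x| ^ (-2:ℝ) * a ^ (-2:ℝ) := le_refl _
    exact (e1.trans comp1).trans e2
  -- decay of 𝓕 h
  have hFh : 𝓕 h = fun ξ : ℝ => (a:ℂ) * 𝓕 (⇑g) (a * ξ + b) := funext (fourier_h a b ha g)
  have hFg2 : (𝓕 (⇑g)) =O[cocompact ℝ] (fun x : ℝ => ‖x‖ ^ (-2:ℝ)) := by
    have := (SchwartzMap.fourierTransformCLM ℝ g).isBigO_cocompact_rpow (-2)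
    rwa [SchwartzMap.fourierTransformCLM_apply] at this
  have hFh1 : (𝓕 h) =O[cocompact ℝ] (fun x : ℝ => |x| ^ (-2:ℝ)) := by
    rw [hFh]
    have c1 : (fun ξ : ℝ => 𝓕 (⇑g) (a * ξ + b)) =O[cocompact ℝ]
        (fun ξ : ℝ => ‖a * ξ + b‖ ^ (-2:ℝ)) := hFg2.comp_tendsto hτ2
    exact ((hFg2.comp_tendsto hτ2).trans (rpow_affine_isBigO a b ha)).const_mul_left (a:ℂ)
  -- Poisson
  have P := Real.tsum_eq_tsum_fourier_of_rpow_decay hc one_lt_two hh1 hFh1 0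
  simp only [zero_add, QuotientAddGroup.mk_zero, fourier_eval_zero, mul_one] at P
  -- rewrite both sides
  have hL : (∑' n : ℤ, h n)
      = ∑' k : ℤ, Complex.exp (-2 * Real.pi * Complex.I * b * k / a) * g (k / a) := by
    apply tsum_congr
    intro k
    rw [hh_def]
    push_cast
    ring_nf
  have hR : (∑' n : ℤ, 𝓕 h n) = (a:ℂ) * ∑' k : ℤ, fourierTransform (⇑g) (a * k + b) := by
    rw [hFh, ← tsum_mul_left]
    apply tsum_congr
    intro k
    rw [fourierTransform_eq]
  rw [hL, hR] at P
  rw [P, ← mul_assoc, one_div, inv_mul_cancel₀ hA, one_mul]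
end

section
/- Define Λ = ⋃_{n ≥ 0} (2·4ⁿ ℤ + (4ⁿ − 1)) ⊆ ℤ. Then the sets 2·4ⁿ ℤ + (4ⁿ − 1), for n ≥ 0, are pairwise disjoint. -/
/-- The arithmetic progression `2·4ⁿℤ + (4ⁿ - 1)`. -/
def prog (n : ℕ) : Set ℤ := {m : ℤ | ∃ q : ℤ, m = 2 * 4 ^ n * q + (4 ^ n - 1)}

lemma prog_disjoint_of_lt {m n : ℕ} (h : m < n) : Disjoint (prog m) (prog n) := by
  rw [Set.disjoint_left]
  rintro x ⟨q, hq⟩ ⟨r, hr⟩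
  have key : (4 : ℤ) ^ m * (2 * q + 1) = 4 ^ m * (4 ^ (n - m) * (2 * r + 1)) := by
    rw [← mul_assoc, ← pow_add, Nat.add_sub_cancel' h.le]
    have := hq.symm.trans hr
    ring_nf
    ring_nf at this
    linarith
  have h2 : (2 * q + 1 : ℤ) = 4 ^ (n - m) * (2 * r + 1) := by
    have h4 : (4 : ℤ) ^ m ≠ 0 := by positivity
    exact mul_left_cancel₀ h4 key
  have hk : 1 ≤ n - m := by omega
  obtain ⟨k, hk'⟩ := Nat.exists_eq_add_of_le hk
  rw [hk', pow_add, pow_one, mul_assoc] at h2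
  set s : ℤ := 4 ^ k * (2 * r + 1) with hs
  omega

/-- The progressions `2·4ⁿℤ + (4ⁿ - 1)`, `n ≥ 0`, are pairwise disjoint. -/
theorem prog_pairwise_disjoint :
    ∀ m n : ℕ, m ≠ n → Disjoint (prog m) (prog n) := by
  intro m n hmn
  rcases lt_or_gt_of_ne hmn with h | h
  · exact prog_disjoint_of_lt h
  · exact (prog_disjoint_of_lt h).symm
end

section
/- Define Λ = ⋃_{n ≥ 0} (2·4ⁿ ℤ + (4ⁿ − 1)) and Δ = Λ ∪ (−Λ). Then Δ is the disjoint union of 2ℤ and the sets Δ_n := (2·4ⁿ ℤ + (4ⁿ − 1)) ∪ (2·4ⁿ ℤ + (1 − 4ⁿ)) for n ≥ 1; that is, Δ = 2ℤ ∪ ⋃_{n≥1} Δ_n, the sets 2ℤ and Δ_n (n ≥ 1) are pairwise disjoint, and their union is Δ. -/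
/-- The set `Λ` of left endpoints of `a`'s in the period doubling sequence. -/
def lam : Set ℤ := ⋃ n : ℕ, prog n

/-- The symmetric set `Δ = Λ ∪ (-Λ)`. -/
def delta : Set ℤ := lam ∪ (-lam)

/-- The layer `Δ_n = (2·4ⁿℤ + (4ⁿ - 1)) ∪ (2·4ⁿℤ + (1 - 4ⁿ))`, for `n ≥ 1`. -/
def deltaN (n : ℕ) : Set ℤ :=
  prog n ∪ {m : ℤ | ∃ q : ℤ, m = 2 * 4 ^ n * q + (1 - 4 ^ n)}

lemma key (m n : ℕ) (hm : 1 ≤ m) (hmn : m < n) (a b ε δ : ℤ)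
    (hε : ε = 1 ∨ ε = -1) (hδ : δ = 1 ∨ δ = -1)
    (h : 2 * 4 ^ m * a + ε * (4 ^ m - 1) = 2 * 4 ^ n * b + δ * (4 ^ n - 1)) : False := by
  have hpow : (4:ℤ) ^ n = 4 ^ (m + 1) * 4 ^ (n - m - 1) := by
    rw [← pow_add]; congr 1; omega
  have hdvd : (4:ℤ) ^ (m + 1) ∣ 4 ^ m * (2 * a + ε) + (δ - ε) := by
    have : 4 ^ m * (2 * a + ε) + (δ - ε)
        = 4 ^ (m + 1) * (4 ^ (n - m - 1) * (2 * b + δ)) := by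
      have hx : 4 ^ m * (2 * a + ε) + (δ - ε) = 4 ^ n * (2 * b + δ) := by ring_nf; linarith [h]
      rw [hx, hpow]; ring
    exact ⟨_, this⟩
  have hdvd2 : (4:ℤ) ^ m ∣ δ - ε := by
    have h1 : (4:ℤ) ^ m ∣ 4 ^ m * (2 * a + ε) + (δ - ε) :=
      dvd_trans (pow_dvd_pow 4 (Nat.le_succ m)) hdvd
    have := (dvd_add_right (dvd_mul_right ((4:ℤ)^m) (2*a+ε))).mp h1
    exact this
  have h4 : (4:ℤ) ∣ δ - ε := dvd_trans (dvd_pow_self 4 (by omega : m ≠ 0)) hdvd2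
  have heq : δ = ε := by
    rcases hε with rfl | rfl <;> rcases hδ with rfl | rfl <;>
      first
        | rfl
        | (obtain ⟨c, hc⟩ := h4; omega)
  subst heq
  simp only [sub_self, add_zero] at hdvd
  rw [pow_succ] at hdvd
  have h4m : (4:ℤ) ^ m ≠ 0 := by positivity
  have : (4:ℤ) ∣ 2 * a + δ := by
    obtain ⟨c, hc⟩ := hdvd
    refine ⟨c, ?_⟩
    have := mul_left_cancel₀ h4m (by linarith [hc] : (4:ℤ)^m * (2*a+δ) = 4^m * (4*c))
    linarith
  obtain ⟨c, hc⟩ := this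
  rcases hδ with rfl | rfl <;> omega

/-- `Δ` is the disjoint union of `2ℤ` and the layers `Δ_n`, `n ≥ 1`. -/
theorem delta_decomposition :
    (delta = {m : ℤ | ∃ q : ℤ, m = 2 * q} ∪ ⋃ n : ℕ, deltaN (n + 1)) ∧
    (∀ n : ℕ, 1 ≤ n → Disjoint {m : ℤ | ∃ q : ℤ, m = 2 * q} (deltaN n)) ∧
    (∀ m n : ℕ, 1 ≤ m → 1 ≤ n → m ≠ n → Disjoint (deltaN m) (deltaN n)) := by
  refine ⟨?_, ?_, ?_⟩
  · ext x
    simp only [delta, lam, deltaN, prog, Set.mem_union, Set.mem_iUnion, Set.mem_neg,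
      Set.mem_setOf_eq]
    constructor
    · rintro (⟨n, q, h⟩ | ⟨n, q, h⟩)
      · cases n with
        | zero => exact Or.inl ⟨q, by simpa using h⟩
        | succ k => exact Or.inr ⟨k, Or.inl ⟨q, h⟩⟩
      · cases n with
        | zero => exact Or.inl ⟨-q, by push_cast at h ⊢; linarith⟩
        | succ k => exact Or.inr ⟨k, Or.inr ⟨-q, by linarith⟩⟩
    · rintro (⟨q, h⟩ | ⟨n, ⟨q, h⟩ | ⟨q, h⟩⟩)
      · exact Or.inl ⟨0, q, by simpa using h⟩
      · exact Or.inl ⟨n + 1, q, h⟩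
      · exact Or.inr ⟨n + 1, -q, by linarith⟩
  · intro n hn
    rw [Set.disjoint_left]
    rintro x ⟨q, hq⟩ hx
    obtain ⟨k, rfl⟩ : ∃ k, n = k + 1 := ⟨n - 1, by omega⟩
    have h4 : (4:ℤ) ^ (k + 1) = 4 * 4 ^ k := by rw [pow_succ]; ring
    rcases hx with ⟨r, hr⟩ | ⟨r, hr⟩
    · have hr2 : x = 8 * ((4:ℤ)^k * r) + 4 * 4^k - 1 := by rw [hr, h4]; ring
      set s := (4:ℤ) ^ k with hsd
      obtain ⟨t, ht⟩ : ∃ t, s * r = t := ⟨_, rfl⟩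
      rw [ht] at hr2
      omega
    · have hr2 : x = 8 * ((4:ℤ)^k * r) + 1 - 4 * 4^k := by rw [hr, h4]; ring
      set s := (4:ℤ) ^ k with hsd
      obtain ⟨t, ht⟩ : ∃ t, s * r = t := ⟨_, rfl⟩
      rw [ht] at hr2
      omega
  · intro m n hm hn hmn
    rw [Set.disjoint_left]
    rintro x hxm hxn
    rcases lt_or_gt_of_ne hmn with h | h
    · rcases hxm with ⟨a, ha⟩ | ⟨a, ha⟩ <;> rcases hxn with ⟨b, hb⟩ | ⟨b, hb⟩
      · exact key m n hm h a b 1 1 (Or.inl rfl) (Or.inl rfl) (by linarith)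
      · exact key m n hm h a b 1 (-1) (Or.inl rfl) (Or.inr rfl) (by linarith)
      · exact key m n hm h a b (-1) 1 (Or.inr rfl) (Or.inl rfl) (by linarith)
      · exact key m n hm h a b (-1) (-1) (Or.inr rfl) (Or.inr rfl) (by linarith)
    · rcases hxm with ⟨a, ha⟩ | ⟨a, ha⟩ <;> rcases hxn with ⟨b, hb⟩ | ⟨b, hb⟩
      · exact key n m hn h b a 1 1 (Or.inl rfl) (Or.inl rfl) (by linarith)
      · exact key n m hn h b a (-1) 1 (Or.inr rfl) (Or.inl rfl) (by linarith)
      · exact key n m hn h b a 1 (-1) (Or.inl rfl) (Or.inr rfl) (by linarith)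
      · exact key n m hn h b a (-1) (-1) (Or.inr rfl) (Or.inr rfl) (by linarith)
end
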